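/- arXiv:math/0701651 — 5 statements merged into one kernel-verified Lean document; each statement's English description precedes it below -/
import Mathlib

section
/- In a best-of-5 series under the 2-2-1 format (home, home, road, road, home), the probability that the team with home-field advantage wins the series equals (3r²+6r+1)p³ − (9r²+6r)p⁴ + 6r²p⁵, the same as under the 2-3 format. -/
open Finset

/-- Per-game win probability for the team with home-field advantage:
`p` for a home game, `r*p` for a road game. -/
def gameProb (p r : ℝ) (home : Bool) : ℝ := if home then p else r * p

/-- Probability of a full sequence of outcomes `ω` (`true` = the team wins that game),
given the home/road schedule `sched` (`true` = home game), with games independent. -/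
def outcomeProb {n : ℕ} (p r : ℝ) (sched : Fin n → Bool) (ω : Fin n → Bool) : ℝ :=
  ∏ i, if ω i then gameProb p r (sched i) else 1 - gameProb p r (sched i)

/-- Probability that the team wins at least `k` of the `n` games; for a best-of-`n`
series (`n = 2k-1`) this equals the probability of winning the series, since the
series is decided as soon as one team reaches `k` wins. -/
def seriesWinProb {n : ℕ} (p r : ℝ) (sched : Fin n → Bool) (k : ℕ) : ℝ :=
  ∑ ω ∈ Finset.univ.filter
      (fun ω : Fin n → Bool => k ≤ (Finset.univ.filter (fun i => ω i = true)).card),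
    outcomeProb p r sched ω


lemma sum_fun_succ {n : ℕ} (f : (Fin (n+1) → Bool) → ℝ) :
    ∑ ω, f ω = ∑ b : Bool, ∑ ω : Fin n → Bool, f (Fin.cons b ω) := by
  rw [← ((Fin.consEquiv fun _ => Bool).sum_comp f), Fintype.sum_prod_type]
  rfl

lemma i51 : (1 : Fin 5) = Fin.succ 0 := rfl
lemma i52 : (2 : Fin 5) = Fin.succ 1 := rfl
lemma i53 : (3 : Fin 5) = Fin.succ 2 := rfl
lemma i54 : (4 : Fin 5) = Fin.succ 3 := rfl
lemma i41 : (1 : Fin 4) = Fin.succ 0 := rfl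
lemma i42 : (2 : Fin 4) = Fin.succ 1 := rfl
lemma i43 : (3 : Fin 4) = Fin.succ 2 := rfl
lemma i31 : (1 : Fin 3) = Fin.succ 0 := rfl
lemma i32 : (2 : Fin 3) = Fin.succ 1 := rfl
lemma i21 : (1 : Fin 2) = Fin.succ 0 := rfl

set_option maxRecDepth 4000 in
lemma key (p r : ℝ) (s : Fin 5 → Bool) :
    seriesWinProb p r s 3 =
    ∑ b0 : Bool, ∑ b1 : Bool, ∑ b2 : Bool, ∑ b3 : Bool, ∑ b4 : Bool,
      if 3 ≤ (Finset.univ.filter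
          (fun i => (![b0,b1,b2,b3,b4] : Fin 5 → Bool) i = true)).card then
        outcomeProb p r s ![b0,b1,b2,b3,b4] else 0 := by
  simp only [seriesWinProb, Finset.sum_filter, sum_fun_succ]
  norm_num [Fintype.sum_unique]
  rfl

set_option maxRecDepth 200000 in
set_option maxHeartbeats 1000000 in
lemma val1 (p r : ℝ) :
    seriesWinProb p r ![true, true, false, false, true] 3 =
      (3*r^2 + 6*r + 1) * p^3 - (9*r^2 + 6*r) * p^4 + 6*r^2 * p^5 := by
  rw [key]
  simp only [outcomeProb, gameProb, Fin.prod_univ_five, Finset.card_filter, Fin.sum_univ_five,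
    i51, i52, i53, i54, i41, i42, i43, i31, i32, i21,
    Matrix.cons_val_zero, Matrix.cons_val_succ, if_true]
  simp only [Fintype.sum_bool]
  norm_num
  ring

set_option maxRecDepth 200000 in
set_option maxHeartbeats 1000000 in
lemma val2 (p r : ℝ) :
    seriesWinProb p r ![false, false, true, true, true] 3 =
      (3*r^2 + 6*r + 1) * p^3 - (9*r^2 + 6*r) * p^4 + 6*r^2 * p^5 := by
  rw [key]
  simp only [outcomeProb, gameProb, Fin.prod_univ_five, Finset.card_filter, Fin.sum_univ_five,
    i51, i52, i53, i54, i41, i42, i43, i31, i32, i21,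
    Matrix.cons_val_zero, Matrix.cons_val_succ, if_true]
  simp only [Fintype.sum_bool]
  norm_num
  ring

/-- Best-of-5, 2-2-1 format (home, home, road, road, home): the team with home-field
advantage wins the series with probability `(3r²+6r+1)p³ − (9r²+6r)p⁴ + 6r²p⁵`,
the same as in the 2-3 format. -/
theorem stmt_3 (p r : ℝ) (hp0 : 0 ≤ p) (hp1 : p ≤ 1) (hr : 0 ≤ r) (hrp : r * p ≤ 1) :
    seriesWinProb p r ![true, true, false, false, true] 3 =
      (3*r^2 + 6*r + 1) * p^3 - (9*r^2 + 6*r) * p^4 + 6*r^2 * p^5 ∧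
    seriesWinProb p r ![true, true, false, false, true] 3 =
      seriesWinProb p r ![false, false, true, true, true] 3 := by
  exact ⟨val1 p r, (val1 p r).trans (val2 p r).symm⟩
end

section
/- The probability that the team with home-field advantage wins a best-of-5 series in the 2-3 format equals the probability it wins in the 2-2-1 format, for all p ∈ [0,1] and r with 0 ≤ rp ≤ 1. -/
open Finset

lemma sum_pi_succ {n : ℕ} (f : (Fin (n+1) → Bool) → ℝ) :
    ∑ ω : Fin (n+1) → Bool, f ω = ∑ b : Bool, ∑ ω : Fin n → Bool, f (Matrix.vecCons b ω) := by
  rw [← (Fin.consEquiv (fun _ => Bool)).sum_comp, Fintype.sum_prod_type]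
  rfl

set_option maxRecDepth 10000 in
set_option maxHeartbeats 1000000 in

/-- The best-of-5 win probability for the team with home-field advantage is the same
in the 2-3 format (games 1,2 away; 3,4,5 home) and the 2-2-1 format
(games 1,2,5 home; 3,4 away). -/
theorem stmt_5 (p r : ℝ) (hp0 : 0 ≤ p) (hp1 : p ≤ 1) (hr0 : 0 ≤ r * p) (hrp : r * p ≤ 1) :
    seriesWinProb p r ![false, false, true, true, true] 3 =
      seriesWinProb p r ![true, true, false, false, true] 3 := by
  simp only [seriesWinProb, Finset.sum_filter, outcomeProb, gameProb]
  simp only [sum_pi_succ, Fintype.sum_unique, Fintype.sum_bool]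
  simp only [Finset.card_filter, Fin.sum_univ_five, Fin.prod_univ_five,
    Matrix.cons_val_zero, Matrix.cons_val_one, Matrix.head_cons,
    Matrix.cons_val_two, Matrix.tail_cons, Matrix.cons_val_three, Matrix.cons_val_four]
  norm_num
  ring
end

section
/- With r = 0.894762228, there exists a unique p₀ ∈ (0,1) with f(p₀) = 0, and p₀ ∈ (0.5377, 0.5378), where f(p) = 6r²p⁵ − (9r²+6r)p⁴ + (3r²+8r+1)p³ − (2r+1)p². Moreover f(p) < 0 for p ∈ (0, p₀) and f(p) > 0 for p ∈ (p₀, 1). -/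
/-- The road multiplier: the average ratio of road to home winning percentage of the
96 playoff teams of 1995–2006. -/
noncomputable def r : ℝ := 0.894762228

/-- Five-game minus three-game series win probability for the team with
home-field advantage (home win probability `p`, road win probability `r*p`). -/
noncomputable def f (p : ℝ) : ℝ := 6 * r^2 * p^5 - (9*r^2 + 6*r) * p^4 + (3*r^2 + 8*r + 1) * p^3 - (2*r + 1) * p^2

/-- Seven-game minus five-game series win probability for the team with
home-field advantage. -/
noncomputable def s (p : ℝ) : ℝ := -20*r^3 * p^7 + (40*r^3 + 30*r^2) * p^6 - (24*r^3 + 54*r^2 + 12*r) * p^5 + (4*r^3 + 27*r^2 + 18*r + 1) * p^4 - (3*r^2 + 6*r + 1) * p^3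

set_option maxHeartbeats 2000000 in
theorem stmt_9 : ∃ p₀ : ℝ, p₀ ∈ Set.Ioo (0:ℝ) 1 ∧ f p₀ = 0 ∧
    p₀ ∈ Set.Ioo (0.5377 : ℝ) 0.5378 ∧
    (∀ q ∈ Set.Ioo (0:ℝ) 1, f q = 0 → q = p₀) ∧
    (∀ q ∈ Set.Ioo (0:ℝ) p₀, f q < 0) ∧
    (∀ q ∈ Set.Ioo p₀ (1:ℝ), f q > 0) := by
  have hr : r = 0.894762228 := rfl
  have hDpos : (0:ℝ) < 9*r^4 - 12*r^3 + 12*r^2 := by rw [hr]; norm_num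
  have hApos : (0:ℝ) < 12 * r^2 := by rw [hr]; norm_num
  set w : ℝ := Real.sqrt (9*r^4 - 12*r^3 + 12*r^2) with hwdef
  have hw2 : w^2 = 9*r^4 - 12*r^3 + 12*r^2 := Real.sq_sqrt hDpos.le
  have hwnn : 0 ≤ w := Real.sqrt_nonneg _
  -- bounds on w
  have hL : (3*r^2 + 6*r) - 0.5378 * (12*r^2) < w := by
    have h1 : (0:ℝ) < (3*r^2 + 6*r) - 0.5378 * (12*r^2) := by rw [hr]; norm_num
    have h2 : ((3*r^2 + 6*r) - 0.5378 * (12*r^2))^2 < 9*r^4 - 12*r^3 + 12*r^2 := by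
      rw [hr]; norm_num
    nlinarith [hw2, hwnn, h1, h2]
  have hU : w < (3*r^2 + 6*r) - 0.5377 * (12*r^2) := by
    have h1 : (0:ℝ) < (3*r^2 + 6*r) - 0.5377 * (12*r^2) := by rw [hr]; norm_num
    have h2 : 9*r^4 - 12*r^3 + 12*r^2 < ((3*r^2 + 6*r) - 0.5377 * (12*r^2))^2 := by
      rw [hr]; norm_num
    nlinarith [hw2, hwnn, h1, h2]
  -- the larger root is > 1, i.e. w > 12r² - (3r²+6r)
  have hw1 : 12*r^2 - (3*r^2 + 6*r) < w := by
    have h2 : (12*r^2 - (3*r^2 + 6*r))^2 < 9*r^4 - 12*r^3 + 12*r^2 := by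
      rw [hr]; norm_num
    nlinarith [hw2, hwnn, h2]
  set p₀ : ℝ := ((3*r^2 + 6*r) - w) / (12*r^2) with hp0def
  have hp0 : 12*r^2*p₀ = (3*r^2 + 6*r) - w := by
    rw [hp0def]; field_simp
  have hp0lb : (0.5377:ℝ) < p₀ := by
    rw [hp0def, lt_div_iff₀ hApos]; linarith
  have hp0ub : p₀ < (0.5378:ℝ) := by
    rw [hp0def, div_lt_iff₀ hApos]; linarith
  have hp0pos : (0:ℝ) < p₀ := by linarith
  have hp0lt1 : p₀ < 1 := by linarith
  -- key factorization
  have key : ∀ p : ℝ, 24*r^2 * f p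
      = p^2 * (p - 1) * ((12*r^2*p - ((3*r^2 + 6*r) - w)) * (12*r^2*p - ((3*r^2 + 6*r) + w))) := by
    intro p
    simp only [f]
    linear_combination (p^2 * (p - 1)) * hw2
  have h24 : (0:ℝ) < 24*r^2 := by linarith
  refine ⟨p₀, ⟨hp0pos, hp0lt1⟩, ?_, ⟨hp0lb, hp0ub⟩, ?_, ?_, ?_⟩
  · -- f p₀ = 0
    have h := key p₀
    rw [hp0, sub_self, zero_mul, mul_zero] at h
    have h24' : (24*r^2 : ℝ) ≠ 0 := ne_of_gt h24
    exact (mul_eq_zero.mp h).resolve_left h24'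
  · -- uniqueness
    rintro q ⟨hq0, hq1⟩ hfq
    have h := key q
    rw [hfq, mul_zero] at h
    have hne : q^2 * (q - 1) ≠ 0 :=
      mul_ne_zero (pow_ne_zero 2 (ne_of_gt hq0)) (sub_ne_zero.mpr (ne_of_lt hq1))
    have hX : (12*r^2*q - ((3*r^2 + 6*r) - w)) * (12*r^2*q - ((3*r^2 + 6*r) + w)) = 0 := by
      rcases mul_eq_zero.mp h.symm with h' | h'
      · exact absurd h' hne
      · exact h'
    have h3 : 12*r^2*q - ((3*r^2 + 6*r) + w) < 0 := by nlinarith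
    have h2 : 12*r^2*q - ((3*r^2 + 6*r) - w) = 0 :=
      (mul_eq_zero.mp hX).resolve_right (ne_of_lt h3)
    have : 12*r^2*q = 12*r^2*p₀ := by rw [hp0]; linarith
    exact mul_left_cancel₀ (ne_of_gt hApos) this
  · -- negative on (0, p₀)
    rintro q ⟨hq0, hqp0⟩
    have hq1 : q < 1 := by linarith
    have h := key q
    have hq2 : (0:ℝ) < q^2 := by positivity
    have hqm1 : q - 1 < 0 := by linarith
    have h2 : 12*r^2*q - ((3*r^2 + 6*r) - w) < 0 := by nlinarith [hp0]
    have h3 : 12*r^2*q - ((3*r^2 + 6*r) + w) < 0 := by nlinarith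
    have hneg : 24*r^2 * f q < 0 := by
      rw [h]
      exact mul_neg_of_neg_of_pos (mul_neg_of_pos_of_neg hq2 hqm1)
        (mul_pos_of_neg_of_neg h2 h3)
    by_contra hcon
    push_neg at hcon
    have := mul_le_mul_of_nonneg_left hcon h24.le
    rw [mul_zero] at this
    linarith
  · -- positive on (p₀, 1)
    rintro q ⟨hqp0, hq1⟩
    have hq0 : (0:ℝ) < q := by linarith
    have h := key q
    have hq2 : (0:ℝ) < q^2 := by positivity
    have hqm1 : q - 1 < 0 := by linarith
    have h2 : 12*r^2*q - ((3*r^2 + 6*r) - w) > 0 := by nlinarith [hp0]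
    have h3 : 12*r^2*q - ((3*r^2 + 6*r) + w) < 0 := by nlinarith
    have hpos : 24*r^2 * f q > 0 := by
      rw [h]
      exact mul_pos_of_neg_of_neg (mul_neg_of_pos_of_neg hq2 hqm1)
        (mul_neg_of_pos_of_neg h2 h3)
    by_contra hcon
    push_neg at hcon
    have := mul_le_mul_of_nonneg_left hcon h24.le
    rw [mul_zero] at this
    linarith
end

section
/- With r = 0.894762228, there exists a unique p₀ ∈ (0,1) with s(p₀) = 0, and p₀ ∈ (0.5337, 0.5338), where s is the seven-game minus five-game win probability difference. Moreover s(p) < 0 for p ∈ (0, p₀) and s(p) > 0 for p ∈ (p₀, 1). -/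
/-- The cofactor cubic: `s p = p^3 * (p - 1) * h p`. -/
noncomputable def h (p : ℝ) : ℝ :=
  -20*r^3 * p^3 + (20*r^3 + 30*r^2) * p^2 - (4*r^3 + 24*r^2 + 12*r) * p + (3*r^2 + 6*r + 1)

lemma rval : r = 0.894762228 := rfl

lemma s_eq (p : ℝ) : s p = p^3 * (p - 1) * h p := by unfold s h; ring

lemma h_cont : Continuous h := by unfold h; fun_prop

lemma h_anti : StrictAntiOn h (Set.Icc (0:ℝ) 0.7) := by
  intro x hx y hy hxy
  simp only [Set.mem_Icc] at hx hy
  unfold h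
  rw [rval]
  nlinarith [mul_nonneg hx.1 hy.1, mul_nonneg (mul_nonneg hx.1 hy.1) hy.1,
    mul_nonneg (mul_nonneg hx.1 hx.1) hy.1,
    mul_pos (sub_pos.2 hxy) (sub_pos.2 hxy),
    mul_nonneg (mul_nonneg (sub_nonneg.2 hy.2) (sub_nonneg.2 hx.2)) (sub_pos.2 hxy).le,
    mul_nonneg (sub_nonneg.2 hy.2) hx.1, mul_nonneg (sub_nonneg.2 hx.2) hy.1,
    mul_nonneg (mul_nonneg (sub_nonneg.2 hy.2) hy.1) (sub_pos.2 hxy).le,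
    mul_nonneg (mul_nonneg (sub_nonneg.2 hx.2) hx.1) (sub_pos.2 hxy).le]

lemma h_neg_hi : ∀ q : ℝ, 0.69 ≤ q → q ≤ 1 → h q < 0 := by
  intro q h1 h2
  unfold h
  rw [rval]
  nlinarith [mul_nonneg (sub_nonneg.2 h1) (sub_nonneg.2 h2),
    mul_nonneg (mul_nonneg (sub_nonneg.2 h1) (sub_nonneg.2 h2)) (sub_nonneg.2 h2),
    mul_nonneg (mul_nonneg (sub_nonneg.2 h1) (sub_nonneg.2 h2)) (sub_nonneg.2 h1),
    sq_nonneg (q - 0.86)]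

lemma h_lo_pos : h 0.5337 > 0 := by unfold h; rw [rval]; norm_num

lemma h_hi_neg : h 0.5338 < 0 := by unfold h; rw [rval]; norm_num

theorem stmt_13 : ∃ p₀ : ℝ, p₀ ∈ Set.Ioo (0:ℝ) 1 ∧ s p₀ = 0 ∧
    p₀ ∈ Set.Ioo (0.5337 : ℝ) 0.5338 ∧
    (∀ q ∈ Set.Ioo (0:ℝ) 1, s q = 0 → q = p₀) ∧
    (∀ q ∈ Set.Ioo (0:ℝ) p₀, s q < 0) ∧
    (∀ q ∈ Set.Ioo p₀ (1:ℝ), s q > 0) := by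
  -- get a root of h in [0.5337, 0.5338]
  have hsub : Set.Icc (h 0.5338) (h 0.5337) ⊆ h '' Set.Icc (0.5337:ℝ) 0.5338 :=
    intermediate_value_Icc' (by norm_num) h_cont.continuousOn
  obtain ⟨p₀, hpIcc, hp0⟩ := hsub ⟨h_hi_neg.le, h_lo_pos.le⟩
  have hlo : (0.5337:ℝ) ≤ p₀ := hpIcc.1
  have hhi : p₀ ≤ (0.5338:ℝ) := hpIcc.2
  have hlo' : (0.5337:ℝ) < p₀ := by
    rcases lt_or_eq_of_le hlo with h' | h'
    · exact h'
    · exact absurd (h' ▸ hp0) (ne_of_gt h_lo_pos)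
  have hhi' : p₀ < (0.5338:ℝ) := by
    rcases lt_or_eq_of_le hhi with h' | h'
    · exact h'
    · exact absurd (h'.symm ▸ hp0) (ne_of_lt h_hi_neg)
  have hp01 : p₀ ∈ Set.Ioo (0:ℝ) 1 := ⟨by linarith, by linarith⟩
  have hp07 : p₀ ∈ Set.Icc (0:ℝ) 0.7 := ⟨by linarith, by linarith⟩
  -- sign of h left of p₀
  have hpos : ∀ q : ℝ, 0 < q → q < p₀ → 0 < h q := by
    intro q hq1 hq2
    have := h_anti ⟨hq1.le, by linarith⟩ hp07 hq2
    rw [hp0] at this; linarith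
  -- sign of h right of p₀
  have hneg : ∀ q : ℝ, p₀ < q → q < 1 → h q < 0 := by
    intro q hq1 hq2
    rcases le_or_gt q 0.69 with h' | h'
    · have := h_anti hp07 ⟨by linarith, by linarith⟩ hq1
      rw [hp0] at this; linarith
    · exact h_neg_hi q h'.le hq2.le
  refine ⟨p₀, hp01, by rw [s_eq, hp0]; ring, ⟨hlo', hhi'⟩, ?_, ?_, ?_⟩
  · intro q hq hsq
    obtain ⟨hq0, hq1⟩ := hq
    have hq3 : q ^ 3 * (q - 1) ≠ 0 := by
      have : q ^ 3 > 0 := by positivity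
      have : q - 1 < 0 := by linarith
      intro hc
      rcases mul_eq_zero.1 hc with hc | hc <;> nlinarith
    have hhq : h q = 0 := by
      rw [s_eq] at hsq
      rcases mul_eq_zero.1 hsq with hc | hc
      · exact absurd hc hq3
      · exact hc
    rcases lt_trichotomy q p₀ with h' | h' | h'
    · exact absurd hhq (ne_of_gt (hpos q hq0 h'))
    · exact h'
    · exact absurd hhq (ne_of_lt (hneg q h' hq1))
  · intro q ⟨hq0, hq1⟩
    have h1 : q < 1 := by linarith [hp01.2]
    have hh := hpos q hq0 hq1
    rw [s_eq]
    have : q ^ 3 * (q - 1) < 0 := by nlinarith [pow_pos hq0 3]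
    exact mul_neg_of_neg_of_pos this hh
  · intro q ⟨hq0, hq1⟩
    have hq0' : 0 < q := by linarith [hp01.1]
    have hh := hneg q hq0 hq1
    rw [s_eq]
    have : q ^ 3 * (q - 1) < 0 := by nlinarith [pow_pos hq0' 3]
    exact mul_pos_of_neg_of_neg this hh
end

section
/- For fixed r ∈ (0,1], the best-of-5 win probability P₅(p) = (3r²+6r+1)p³ − (9r²+6r)p⁴ + 6r²p⁵ is monotonically nondecreasing in p on [0, 1]. -/
/-- For fixed `r ∈ (0,1]`, the best-of-5 win probability
`P₅(p) = (3r²+6r+1)p³ − (9r²+6r)p⁴ + 6r²p⁵` is nondecreasing in `p` on `[0,1]`. -/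
theorem stmt_18 (r : ℝ) (hr0 : 0 < r) (hr1 : r ≤ 1) :
    MonotoneOn (fun p : ℝ => (3*r^2 + 6*r + 1) * p^3 - (9*r^2 + 6*r) * p^4 + 6*r^2 * p^5)
      (Set.Icc (0:ℝ) 1) := by
  have hd : ∀ x : ℝ, HasDerivAt
      (fun p : ℝ => (3*r^2 + 6*r + 1) * p^3 - (9*r^2 + 6*r) * p^4 + 6*r^2 * p^5)
      ((3*r^2 + 6*r + 1) * (3*x^2) - (9*r^2 + 6*r) * (4*x^3) + 6*r^2 * (5*x^4)) x := by
    intro x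
    have h3 := (hasDerivAt_pow 3 x).const_mul (3*r^2 + 6*r + 1)
    have h4 := (hasDerivAt_pow 4 x).const_mul (9*r^2 + 6*r)
    have h5 := (hasDerivAt_pow 5 x).const_mul (6*r^2)
    exact ((h3.sub h4).add h5).congr_deriv (by norm_num)
  apply monotoneOn_of_deriv_nonneg (convex_Icc 0 1)
  · exact (Continuous.continuousOn (by continuity))
  · intro x hx
    exact (hd x).differentiableAt.differentiableWithinAt
  · intro x hx
    rw [interior_Icc] at hx
    obtain ⟨hx0, hx1⟩ := hx
    rw [(hd x).deriv]
    nlinarith [sq_nonneg (1 - r), sq_nonneg x, mul_nonneg (sq_nonneg x) (sq_nonneg (1-r)),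
      mul_nonneg (mul_nonneg hx0.le (sub_nonneg.2 hx1.le)) (mul_nonneg hx0.le hr0.le),
      mul_nonneg (mul_nonneg (mul_nonneg hx0.le hx0.le) (sub_nonneg.2 hx1.le)) hr0.le,
      mul_nonneg (mul_nonneg (mul_nonneg hx0.le hx0.le) (sub_nonneg.2 hx1.le)) (mul_nonneg hr0.le (sub_nonneg.2 hr1)),
      mul_nonneg (mul_nonneg (mul_nonneg hx0.le hx0.le) (mul_nonneg (sub_nonneg.2 hx1.le) (sub_nonneg.2 hx1.le))) (sq_nonneg r)]
end
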